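/- arXiv:1907.05077 — 4 statements merged into one kernel-verified Lean document; each statement's English description precedes it below -/
import Mathlib

section
/- Let C ⊆ R^p be a closed cone with λ'Sλ > 0 for all nonzero λ ∈ C, where S is symmetric positive semidefinite. Suppose β̂ is the unique minimizer over β ∈ C of 1 − 2m'β + β'Sβ and λ̂ is the unique maximizer of m'λ over ({λ ∈ C : λ'Sλ = 1} ∪ {0}). Then if β̂ ≠ 0, λ̂ = β̂ / sqrt(β̂'S β̂), and if β̂ = 0, then λ̂ = 0. -/
open Matrix

/-- Proposition 1: relation between the unique minimizer `β̂` of `1 - 2m'β + β'Sβ` over a closed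
cone `C` and the unique maximizer `λ̂` of `m'λ` over `({λ ∈ C : λ'Sλ = 1} ∪ {0})`. -/
theorem stmt3 {p : ℕ} (C : Set (Fin p → ℝ))
    (hCclosed : IsClosed C)
    (hCcone : ∀ l ∈ C, ∀ γ : ℝ, 0 < γ → γ • l ∈ C)
    (S : Matrix (Fin p) (Fin p) ℝ) (hS : S.PosSemidef)
    (hSpos : ∀ l ∈ C, l ≠ 0 → 0 < l ⬝ᵥ S.mulVec l)
    (m : Fin p → ℝ) (βhat lhat : Fin p → ℝ)
    (hβmem : βhat ∈ C)
    (hβuniq : ∀ b ∈ C, b ≠ βhat →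
      1 - 2 * (m ⬝ᵥ βhat) + βhat ⬝ᵥ S.mulVec βhat < 1 - 2 * (m ⬝ᵥ b) + b ⬝ᵥ S.mulVec b)
    (hlmem : lhat ∈ {l ∈ C | l ⬝ᵥ S.mulVec l = 1} ∪ {0})
    (hluniq : ∀ l ∈ ({l ∈ C | l ⬝ᵥ S.mulVec l = 1} ∪ {0} : Set (Fin p → ℝ)),
      l ≠ lhat → m ⬝ᵥ l < m ⬝ᵥ lhat) :
    (βhat ≠ 0 → lhat = (Real.sqrt (βhat ⬝ᵥ S.mulVec βhat))⁻¹ • βhat) ∧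
    (βhat = 0 → lhat = 0) := by
  have key : ∀ (l : Fin p → ℝ) (γ : ℝ),
      (γ • l) ⬝ᵥ S.mulVec (γ • l) = γ ^ 2 * (l ⬝ᵥ S.mulVec l) := by
    intro l γ
    rw [Matrix.mulVec_smul, dotProduct_smul, smul_dotProduct, smul_eq_mul, smul_eq_mul]
    ring
  have keym : ∀ (l : Fin p → ℝ) (γ : ℝ), m ⬝ᵥ (γ • l) = γ * (m ⬝ᵥ l) := by
    intro l γ
    rw [dotProduct_smul, smul_eq_mul]
  have smul_ne : ∀ (l : Fin p → ℝ) (γ : ℝ), l ≠ 0 → γ ≠ 1 → γ • l ≠ l := by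
    intro l γ hl hγ h
    apply hl
    have h2 : (γ - 1) • l = 0 := by rw [sub_smul, one_smul, h, sub_self]
    rcases smul_eq_zero.mp h2 with h3 | h3
    · exact absurd (by linarith [sub_eq_zero.mp (by linarith [h3] : γ - 1 = 0)] : γ = 1) hγ
    · exact h3
  constructor
  · intro hβ0
    set t := βhat ⬝ᵥ S.mulVec βhat with ht_def
    set a := m ⬝ᵥ βhat with ha_def
    have ht : 0 < t := hSpos βhat hβmem hβ0
    -- first show a = t
    have ha : a = t := by
      by_contra hne
      rcases le_or_gt a 0 with hle | hpos
      · have hmem := hCcone βhat hβmem (1/2) (by norm_num)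
        have hneq := smul_ne βhat (1/2) hβ0 (by norm_num)
        have := hβuniq _ hmem hneq
        rw [keym, key] at this
        nlinarith
      · have hγ : 0 < a / t := div_pos hpos ht
        have hmem := hCcone βhat hβmem (a/t) hγ
        have hneq := smul_ne βhat (a/t) hβ0 (by
          intro h
          exact hne (by field_simp at h; linarith))
        have := hβuniq _ hmem hneq
        rw [keym, key, ← ha_def] at this
        have h2 : (a/t)^2 * t = a^2 / t := by field_simp
        rw [h2] at this
        have h3 : a - t ≠ 0 := sub_ne_zero.mpr hne
        have h3' : 0 < (a - t)^2 := by positivity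
        have h4 : a^2 / t * t = a^2 := by field_simp
        have h5 : a / t * a * t = a^2 := by field_simp
        nlinarith [mul_lt_mul_of_pos_right this ht, h3', h4, h5]
    have hst : 0 < Real.sqrt t := Real.sqrt_pos.mpr ht
    have hsq : Real.sqrt t * Real.sqrt t = t := Real.mul_self_sqrt ht.le
    set u := (Real.sqrt t)⁻¹ • βhat with hu_def
    have humem : u ∈ C := hCcone βhat hβmem _ (inv_pos.mpr hst)
    have huS : u ⬝ᵥ S.mulVec u = 1 := by
      rw [hu_def, key, sq, ← hsq]
      rw [Real.sqrt_mul_self hst.le]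
      field_simp
      rw [← ht_def, sq, hsq]
    have hum : m ⬝ᵥ u = Real.sqrt t := by
      rw [hu_def, keym, ← ha_def, ha, ← hsq]
      rw [Real.sqrt_mul_self hst.le]
      field_simp
    by_contra hlu
    have hune : u ≠ lhat := fun h => hlu h.symm
    have hlt : m ⬝ᵥ u < m ⬝ᵥ lhat :=
      hluniq u (Or.inl ⟨humem, huS⟩) hune
    have hs : Real.sqrt t < m ⬝ᵥ lhat := by rwa [hum] at hlt
    have hlne0 : lhat ≠ 0 := by
      intro h
      rw [h, dotProduct_zero] at hs
      linarith
    have hlC : lhat ∈ C ∧ lhat ⬝ᵥ S.mulVec lhat = 1 := by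
      rcases hlmem with h | h
      · exact ⟨h.1, h.2⟩
      · exact absurd h hlne0
    set s := m ⬝ᵥ lhat with hs_def
    have hspos : 0 < s := lt_trans hst hs
    have hbmem : s • lhat ∈ C := hCcone lhat hlC.1 s hspos
    by_cases hbe : s • lhat = βhat
    · -- then βhat = s • lhat, t = s^2, u = lhat
      have h1 : t = s ^ 2 := by
        rw [ht_def, ← hbe, key, hlC.2, mul_one]
      have h2 : Real.sqrt t = s := by
        rw [h1, Real.sqrt_sq hspos.le]
      apply hune
      rw [hu_def, ← hbe, h2, smul_smul, inv_mul_cancel₀ (ne_of_gt hspos), one_smul]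
    · have := hβuniq _ hbmem hbe
      rw [keym, key, hlC.2] at this
      nlinarith [hsq, hs, hst, ha]
  · intro hβ0
    by_contra hl0
    have hlC : lhat ∈ C ∧ lhat ⬝ᵥ S.mulVec lhat = 1 := by
      rcases hlmem with h | h
      · exact ⟨h.1, h.2⟩
      · exact absurd h hl0
    set s := m ⬝ᵥ lhat with hs_def
    have hspos : 0 < s := by
      have := hluniq 0 (Or.inr rfl) (fun h => hl0 h.symm)
      rwa [dotProduct_zero] at this
    have hbmem : s • lhat ∈ C := hCcone lhat hlC.1 s hspos
    have hbne : s • lhat ≠ βhat := by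
      rw [hβ0]
      exact smul_ne_zero (ne_of_gt hspos) hl0
    have := hβuniq _ hbmem hbne
    rw [keym, key, hlC.2, ← hs_def, hβ0, dotProduct_zero, zero_dotProduct] at this
    nlinarith
end

section
/- Let Σ be symmetric positive definite, C a cone, and μ a nonzero vector with μ ∈ ΣC (i.e., Σ⁻¹μ ∈ C). Then sup over {λ ∈ C : λ'Σλ = 1} of μ'λ equals sqrt(μ'Σ⁻¹μ), i.e., the constrained maximum attains the unconstrained Wald value. -/
open Matrix

lemma sqrt_dot_aux {p : ℕ} (S : Matrix (Fin p) (Fin p) ℝ) (hS : S.IsHermitian)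
    (x y : Fin p → ℝ) : x ⬝ᵥ (S * S).mulVec y = (S.mulVec x) ⬝ᵥ (S.mulVec y) := by
  rw [← mulVec_mulVec, dotProduct_mulVec x S, ← mulVec_transpose]
  have : Sᵀ = S := by
    have := congrArg Matrix.transpose hS.eq; simpa using this.symm
  rw [this]

/-- If `μ ≠ 0` and `Σ⁻¹μ ∈ C`, the constrained maximum of `μ'λ` over `{l ∈ C : l'Σl = 1}`
attains the Wald value `√(μ'Σ⁻¹μ)`. -/
theorem stmt13 {p : ℕ} (Sig : Matrix (Fin p) (Fin p) ℝ) (hSig : Sig.PosDef)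
    (C : Set (Fin p → ℝ)) (hCcone : ∀ l ∈ C, ∀ γ : ℝ, 0 < γ → γ • l ∈ C)
    (μ : Fin p → ℝ) (hμ : μ ≠ 0) (hmem : Sig⁻¹.mulVec μ ∈ C) :
    IsGreatest ((fun l => μ ⬝ᵥ l) '' {l ∈ C | l ⬝ᵥ Sig.mulVec l = 1})
      (Real.sqrt (μ ⬝ᵥ Sig⁻¹.mulVec μ)) := by
  set ν : Fin p → ℝ := Sig⁻¹.mulVec μ with hν
  have hinv : Sig.mulVec ν = μ := by
    rw [hν, mulVec_mulVec, mul_nonsing_inv _ (isUnit_iff_ne_zero.mpr hSig.det_pos.ne'),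
      one_mulVec]
  have hν0 : ν ≠ 0 := by
    intro h
    apply hμ
    rw [← hinv, h, mulVec_zero]
  have ht : 0 < μ ⬝ᵥ ν := by
    have := hSig.dotProduct_mulVec_pos hν0
    rw [dotProduct_comm]
    simpa [hinv] using this
  set t : ℝ := μ ⬝ᵥ ν with htdef
  have hst : 0 < Real.sqrt t := Real.sqrt_pos.mpr ht
  -- quadratic form of ν
  have hq : ν ⬝ᵥ Sig.mulVec ν = t := by
    rw [hinv, dotProduct_comm]
  constructor
  · -- membership: witness (1/√t) • ν
    refine ⟨(Real.sqrt t)⁻¹ • ν, ⟨hCcone ν hmem _ (inv_pos.mpr hst), ?_⟩, ?_⟩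
    · rw [smul_dotProduct, mulVec_smul, dotProduct_smul, hq, smul_eq_mul, smul_eq_mul,
        ← mul_assoc]
      rw [← Real.sqrt_inv]
      rw [show (Real.sqrt t⁻¹ * Real.sqrt t⁻¹ : ℝ) = t⁻¹ from
        Real.mul_self_sqrt (inv_nonneg.mpr ht.le)]
      exact inv_mul_cancel₀ ht.ne'
    · simp only [dotProduct_smul, smul_eq_mul, ← htdef]
      rw [show t = Real.sqrt t * Real.sqrt t from (Real.mul_self_sqrt ht.le).symm]
      field_simp
      rw [Real.sqrt_sq hst.le]
  · rintro x ⟨l, ⟨hlC, hl1⟩, rfl⟩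
    -- Cauchy–Schwarz
    obtain ⟨S, hSsym, hSS⟩ : ∃ S : Matrix (Fin p) (Fin p) ℝ, S.IsHermitian ∧ S * S = Sig :=
      open scoped MatrixOrder in ⟨CFC.sqrt Sig, (CFC.sqrt_nonneg Sig).posSemidef.1,
        CFC.sqrt_mul_sqrt_self Sig hSig.posSemidef.nonneg⟩
    have key : ∀ x y : Fin p → ℝ, x ⬝ᵥ Sig.mulVec y = (S.mulVec x) ⬝ᵥ (S.mulVec y) := by
      intro x y; rw [← hSS]; exact sqrt_dot_aux S hSsym x y
    have hμl : μ ⬝ᵥ l = (S.mulVec ν) ⬝ᵥ (S.mulVec l) := by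
      rw [← hinv, dotProduct_comm, key, dotProduct_comm]
    have hcs : (μ ⬝ᵥ l) ^ 2 ≤ t := by
      have := Finset.sum_mul_sq_le_sq_mul_sq Finset.univ (S.mulVec ν) (S.mulVec l)
      calc (μ ⬝ᵥ l) ^ 2 = (∑ i, S.mulVec ν i * S.mulVec l i) ^ 2 := by
            rw [hμl]; rfl
        _ ≤ (∑ i, S.mulVec ν i ^ 2) * ∑ i, S.mulVec l i ^ 2 := this
        _ = (ν ⬝ᵥ Sig.mulVec ν) * (l ⬝ᵥ Sig.mulVec l) := by
            rw [key ν ν, key l l]; simp [dotProduct, pow_two]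
        _ = t := by rw [hq, hl1, mul_one]
    calc μ ⬝ᵥ l ≤ |μ ⬝ᵥ l| := le_abs_self _
      _ = Real.sqrt ((μ ⬝ᵥ l) ^ 2) := (Real.sqrt_sq_eq_abs _).symm
      _ ≤ Real.sqrt t := Real.sqrt_le_sqrt hcs
end

section
/- Let S be a diagonal positive definite matrix and D a scone (closed under multiplication by positive definite diagonal matrices). If λ̂ is the unique maximizer of m'λ over ({λ ∈ D : λ'Sλ = 1} ∪ {0}) and β̂ ≠ 0 is the unique minimizer of ‖S^{-1/2}m − β‖₂² over β ∈ D, then λ̂ = S^{-1/2}β̂ / sqrt(β̂'β̂). -/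
open Matrix

/-- Proposition 2 (diagonal case): for a diagonal positive definite `S = diag(s₁²,…,s_p²)` and a
scone `D`, if `β̂ ≠ 0` is the unique minimizer of `‖S^{-1/2}m − β‖₂²` over `D` and `λ̂` is the
unique maximizer of `m'λ` over `({λ ∈ D : λ'Sλ = 1} ∪ {0})`, then
`λ̂ = S^{-1/2}β̂ / √(β̂'β̂)`. -/
theorem stmt17 {p : ℕ} (s : Fin p → ℝ) (hs : ∀ j, 0 < s j)
    (D : Set (Fin p → ℝ))
    (hD : ∀ l ∈ D, ∀ d : Fin p → ℝ, (∀ j, 0 < d j) →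
      (Matrix.diagonal d).mulVec l ∈ D)
    (m : Fin p → ℝ) (βhat lhat : Fin p → ℝ)
    (hβmem : βhat ∈ D) (hβne : βhat ≠ 0)
    (hβuniq : ∀ b ∈ D, b ≠ βhat →
      ∑ j, (m j / s j - βhat j) ^ 2 < ∑ j, (m j / s j - b j) ^ 2)
    (hlmem : lhat ∈
      {l ∈ D | l ⬝ᵥ (Matrix.diagonal fun j => (s j) ^ 2).mulVec l = 1} ∪ {0})
    (hluniq : ∀ l ∈
      ({l ∈ D | l ⬝ᵥ (Matrix.diagonal fun j => (s j) ^ 2).mulVec l = 1} ∪ {0} :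
        Set (Fin p → ℝ)), l ≠ lhat → m ⬝ᵥ l < m ⬝ᵥ lhat) :
    lhat = (Real.sqrt (βhat ⬝ᵥ βhat))⁻¹ •
      (Matrix.diagonal fun j => (s j)⁻¹).mulVec βhat := by
  obtain ⟨j0, hj0⟩ : ∃ j, βhat j ≠ 0 := Function.ne_iff.mp hβne
  have hBB : βhat ⬝ᵥ βhat = ∑ j, (βhat j) ^ 2 := by simp [dotProduct, sq]
  have hBpos : 0 < βhat ⬝ᵥ βhat := by
    rw [hBB]
    exact Finset.sum_pos' (fun i _ => sq_nonneg _)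
      ⟨j0, Finset.mem_univ j0, by positivity⟩
  set c := Real.sqrt (βhat ⬝ᵥ βhat) with hc_def
  have hc : 0 < c := Real.sqrt_pos.mpr hBpos
  have hc2 : c ^ 2 = ∑ j, (βhat j) ^ 2 := by
    rw [← hBB, hc_def, Real.sq_sqrt hBpos.le]
  set A := ∑ j, (m j / s j) ^ 2 with hA_def
  set B := ∑ j, (βhat j) ^ 2 with hB_def
  set q := ∑ j, (m j / s j) * βhat j with hq_def
  have hBpos' : 0 < B := hc2 ▸ (by positivity)
  -- expansion of the quadratic objective
  have expand : ∀ b : Fin p → ℝ, ∑ j, (m j / s j - b j) ^ 2 =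
      A - 2 * (∑ j, (m j / s j) * b j) + ∑ j, (b j) ^ 2 := by
    intro b
    have h : ∀ j : Fin p, (m j / s j - b j) ^ 2 =
        (m j / s j) ^ 2 - 2 * ((m j / s j) * b j) + (b j) ^ 2 := fun j => by ring
    simp_rw [h, Finset.sum_add_distrib, Finset.sum_sub_distrib, ← Finset.mul_sum]
    rfl
  -- scaling of βhat remains in D
  have hsmul : ∀ t : ℝ, 0 < t → (fun j => t * βhat j) ∈ D := by
    intro t ht
    have h := hD βhat hβmem (fun _ => t) (fun _ => ht)
    have heq : (Matrix.diagonal (fun _ : Fin p => t)).mulVec βhat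
        = fun j => t * βhat j := by
      funext j; simp [Matrix.mulVec_diagonal]
    rwa [heq] at h
  -- key inequality along the ray
  have key : ∀ t : ℝ, 0 < t → t ≠ 1 → B - 2 * q < t ^ 2 * B - 2 * (t * q) := by
    intro t ht ht1
    have hne : (fun j => t * βhat j) ≠ βhat := by
      intro h
      apply ht1
      have := congrFun h j0
      have h2 : (t - 1) * βhat j0 = 0 := by linarith [this]
      rcases mul_eq_zero.mp h2 with h3 | h3
      · linarith
      · exact absurd h3 hj0
    have h := hβuniq _ (hsmul t ht) hne
    rw [expand βhat, expand (fun j => t * βhat j)] at h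
    have h1 : ∑ j, (m j / s j) * (t * βhat j) = t * q := by
      rw [hq_def, Finset.mul_sum]; exact Finset.sum_congr rfl fun j _ => by ring
    have h2 : ∑ j, (t * βhat j) ^ 2 = t ^ 2 * B := by
      rw [hB_def, Finset.mul_sum]; exact Finset.sum_congr rfl fun j _ => by ring
    rw [h1, h2] at h
    linarith
  -- q = B
  have hq : q = B := by
    by_contra hne
    have hqpos : 0 < q := by
      by_contra h
      push_neg at h
      have := key (1/2 : ℝ) (by norm_num) (by norm_num)
      nlinarith
    have ht1 : q / B ≠ 1 := fun h => hne (by field_simp at h; linarith)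
    have := key (q / B) (by positivity) ht1
    have hB0 : B ≠ 0 := ne_of_gt hBpos'
    have h1 : (q / B) ^ 2 * B = q ^ 2 / B := by field_simp
    have h2 : (q / B) * q = q ^ 2 / B := by ring
    rw [h1, h2] at this
    have h3 : B * (B - 2 * q) < B * (q ^ 2 / B - 2 * (q ^ 2 / B)) := by
      exact (mul_lt_mul_iff_right₀ hBpos').mpr this
    have h4 : B * (q ^ 2 / B) = q ^ 2 := by field_simp
    nlinarith [sq_nonneg (B - q)]
  -- the candidate maximizer
  set lstar := (Real.sqrt (βhat ⬝ᵥ βhat))⁻¹ •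
      (Matrix.diagonal fun j => (s j)⁻¹).mulVec βhat with hlstar_def
  have hlstar_apply : ∀ j, lstar j = c⁻¹ * ((s j)⁻¹ * βhat j) := by
    intro j
    simp [hlstar_def, Matrix.mulVec_diagonal, ← hc_def]
  have hlstarD : lstar ∈ D := by
    have h := hD βhat hβmem (fun j => c⁻¹ * (s j)⁻¹)
      (fun j => mul_pos (inv_pos.mpr hc) (inv_pos.mpr (hs j)))
    have heq : (Matrix.diagonal (fun j => c⁻¹ * (s j)⁻¹)).mulVec βhat = lstar := by
      funext j
      rw [hlstar_apply j]
      simp [Matrix.mulVec_diagonal]; ring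
    rwa [heq] at h
  have hlstar_quad : lstar ⬝ᵥ (Matrix.diagonal fun j => (s j) ^ 2).mulVec lstar = 1 := by
    have h : ∀ j, lstar j * ((s j) ^ 2 * lstar j) = c⁻¹ ^ 2 * (βhat j) ^ 2 := by
      intro j
      rw [hlstar_apply j]
      have hsj := (hs j).ne'
      field_simp
    simp only [dotProduct, Matrix.mulVec_diagonal]
    rw [Finset.sum_congr rfl fun j _ => h j, ← Finset.mul_sum, ← hB_def]
    rw [← hc2, ← mul_pow, inv_mul_cancel₀ hc.ne', one_pow]
  have hmlstar : m ⬝ᵥ lstar = c := by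
    have h : ∀ j, m j * lstar j = c⁻¹ * ((m j / s j) * βhat j) := by
      intro j
      rw [hlstar_apply j, div_eq_mul_inv]
      ring
    simp only [dotProduct]
    rw [Finset.sum_congr rfl fun j _ => h j, ← Finset.mul_sum, ← hq_def, hq]
    rw [← hc2, sq, ← mul_assoc, inv_mul_cancel₀ hc.ne', one_mul]
  -- main argument
  by_contra hne
  have hlt : m ⬝ᵥ lstar < m ⬝ᵥ lhat :=
    hluniq lstar (Or.inl ⟨hlstarD, hlstar_quad⟩) (fun h => hne (h.symm))
  rw [hmlstar] at hlt
  rcases hlmem with ⟨hlD, hlquad⟩ | hl0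
  · set r := m ⬝ᵥ lhat with hr_def
    have hrpos : 0 < r := lt_trans hc hlt
    have hβ'mem : (fun j => (r * s j) * lhat j) ∈ D := by
      have h := hD lhat hlD (fun j => r * s j) (fun j => mul_pos hrpos (hs j))
      have heq : (Matrix.diagonal (fun j => r * s j)).mulVec lhat
          = fun j => (r * s j) * lhat j := by
        funext j; simp [Matrix.mulVec_diagonal]
      rwa [heq] at h
    have hcross : ∑ j, (m j / s j) * ((r * s j) * lhat j) = r * r := by
      have h : ∀ j, (m j / s j) * ((r * s j) * lhat j) = r * (m j * lhat j) := by
        intro j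
        have hsj := (hs j).ne'
        field_simp
      rw [Finset.sum_congr rfl fun j _ => h j, ← Finset.mul_sum]
      simp [hr_def, dotProduct]
    have hsq : ∑ j, ((r * s j) * lhat j) ^ 2 = r ^ 2 := by
      have hq1 : ∑ j, lhat j * ((s j) ^ 2 * lhat j) = 1 := by
        simpa [dotProduct, Matrix.mulVec_diagonal] using hlquad
      have h : ∀ j, ((r * s j) * lhat j) ^ 2 = r ^ 2 * (lhat j * ((s j) ^ 2 * lhat j)) := by
        intro j; ring
      rw [Finset.sum_congr rfl fun j _ => h j, ← Finset.mul_sum, hq1, mul_one]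
    have expandβ : ∑ j, (m j / s j - βhat j) ^ 2 = A - 2 * q + B := by
      rw [expand βhat, ← hq_def, ← hB_def]
    have expandβ' : ∑ j, (m j / s j - (r * s j) * lhat j) ^ 2 = A - r ^ 2 := by
      have h0 := expand (fun j => (r * s j) * lhat j)
      beta_reduce at h0
      rw [hcross, hsq] at h0
      rw [h0]; ring
    have hr2 : c ^ 2 < r ^ 2 := by
      nlinarith [mul_pos (sub_pos.mpr hlt) (show (0:ℝ) < r + c by linarith)]
    have hβ'ne : (fun j => (r * s j) * lhat j) ≠ βhat := by
      intro h
      have hval : ∑ j, (m j / s j - (r * s j) * lhat j) ^ 2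
          = ∑ j, (m j / s j - βhat j) ^ 2 :=
        Finset.sum_congr rfl fun j _ => by rw [← congrFun h j]
      rw [expandβ', expandβ] at hval
      linarith [hc2, hq]
    have h := hβuniq _ hβ'mem hβ'ne
    beta_reduce at h
    rw [expandβ', expandβ] at h
    linarith [hc2, hq]
  · have : lhat = 0 := hl0
    rw [this] at hlt
    simp [dotProduct] at hlt
    linarith
end

section
/- Let X ∈ R^{n×p}, μ̂ = X'ι/n, Ĝ = X'X/n, Σ̂ = Ĝ − μ̂μ̂'. Let C be a closed cone with λ'Σ̂λ > 0 for all nonzero λ ∈ C. If β̂ ≠ 0 is the unique minimizer over β ∈ C of (1/n)‖ι − Xβ‖₂² and λ̂ is the unique maximizer of μ̂'λ over ({λ ∈ C : λ'Σ̂λ = 1} ∪ {0}), then λ̂ = β̂ / sqrt(β̂'Σ̂β̂). -/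
open Matrix

set_option maxHeartbeats 1000000

/-- Proposition 3: for `μ̂ = X'ι/n`, `Ĝ = X'X/n`, `Σ̂ = Ĝ − μ̂μ̂'`, a closed cone `C` with
`λ'Σ̂λ > 0` on `C \ {0}`, if `β̂ ≠ 0` is the unique minimizer of `(1/n)‖ι − Xβ‖₂²` over `C` and
`λ̂` is the unique maximizer of `μ̂'λ` over `({λ ∈ C : λ'Σ̂λ = 1} ∪ {0})`, then
`λ̂ = β̂ / √(β̂'Σ̂β̂)`. -/
theorem stmt19 {n p : ℕ} (hn : 0 < n) (X : Matrix (Fin n) (Fin p) ℝ)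
    (C : Set (Fin p → ℝ)) (hCclosed : IsClosed C)
    (hCcone : ∀ l ∈ C, ∀ γ : ℝ, 0 < γ → γ • l ∈ C)
    (μhat : Fin p → ℝ) (hμhat : μhat = (n : ℝ)⁻¹ • Xᵀ.mulVec (fun _ => 1))
    (Ghat Shat : Matrix (Fin p) (Fin p) ℝ)
    (hGhat : Ghat = (n : ℝ)⁻¹ • (Xᵀ * X))
    (hShat : Shat = Ghat - Matrix.vecMulVec μhat μhat)
    (hSpos : ∀ l ∈ C, l ≠ 0 → 0 < l ⬝ᵥ Shat.mulVec l)
    (βhat lhat : Fin p → ℝ)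
    (hβmem : βhat ∈ C) (hβne : βhat ≠ 0)
    (hβuniq : ∀ b ∈ C, b ≠ βhat →
      (n : ℝ)⁻¹ * ∑ i, (1 - X.mulVec βhat i) ^ 2
        < (n : ℝ)⁻¹ * ∑ i, (1 - X.mulVec b i) ^ 2)
    (hlmem : lhat ∈ {l ∈ C | l ⬝ᵥ Shat.mulVec l = 1} ∪ {0})
    (hluniq : ∀ l ∈ ({l ∈ C | l ⬝ᵥ Shat.mulVec l = 1} ∪ {0} : Set (Fin p → ℝ)),
      l ≠ lhat → μhat ⬝ᵥ l < μhat ⬝ᵥ lhat) :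
    lhat = (Real.sqrt (βhat ⬝ᵥ Shat.mulVec βhat))⁻¹ • βhat := by
  have hn' : (n:ℝ) ≠ 0 := Nat.cast_ne_zero.2 hn.ne'
  -- the key identity
  have key : ∀ b : Fin p → ℝ, (n : ℝ)⁻¹ * ∑ i, (1 - X.mulVec b i) ^ 2
      = 1 - 2 * (μhat ⬝ᵥ b) + ((μhat ⬝ᵥ b)^2 + b ⬝ᵥ Shat.mulVec b) := by
    intro b
    have h1 : μhat ⬝ᵥ b = (n:ℝ)⁻¹ * ((fun _ => (1:ℝ)) ⬝ᵥ X.mulVec b) := by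
      rw [hμhat, smul_dotProduct, mulVec_transpose, ← dotProduct_mulVec]
      simp [smul_eq_mul]
    have h2 : b ⬝ᵥ Ghat.mulVec b = (n:ℝ)⁻¹ * (X.mulVec b ⬝ᵥ X.mulVec b) := by
      rw [hGhat, smul_mulVec, dotProduct_smul, ← mulVec_mulVec,
        dotProduct_mulVec, vecMul_transpose]
      simp [smul_eq_mul]
    have h3 : b ⬝ᵥ Shat.mulVec b = b ⬝ᵥ Ghat.mulVec b - (μhat ⬝ᵥ b)^2 := by
      rw [hShat, sub_mulVec, dotProduct_sub]
      congr 1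
      simp only [vecMulVec, mulVec, dotProduct, of_apply, pow_two, Finset.sum_mul,
        Finset.mul_sum]
      rw [Finset.sum_comm]
      congr 1; ext i; congr 1; ext j; ring
    rw [h3]
    have expand : ∑ i, (1 - X.mulVec b i) ^ 2
        = (n:ℝ) - 2 * ((fun _ => (1:ℝ)) ⬝ᵥ X.mulVec b) + X.mulVec b ⬝ᵥ X.mulVec b := by
      simp only [dotProduct, one_mul]
      rw [Finset.sum_congr rfl (fun i _ => by ring :
        ∀ i ∈ Finset.univ, (1 - X.mulVec b i) ^ 2
          = 1 - 2 * X.mulVec b i + X.mulVec b i * X.mulVec b i)]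
      rw [Finset.sum_add_distrib, Finset.sum_sub_distrib]
      simp [Finset.mul_sum]
    rw [expand, h2]
    field_simp at h1 ⊢
    nlinarith [h1]
  -- scaling of the linear and quadratic forms
  have scal1 : ∀ (γ : ℝ) (b : Fin p → ℝ), μhat ⬝ᵥ (γ • b) = γ * (μhat ⬝ᵥ b) := by
    intro γ b
    simp only [dotProduct, Pi.smul_apply, smul_eq_mul, Finset.mul_sum]
    exact Finset.sum_congr rfl fun i _ => by ring
  have scal2 : ∀ (γ : ℝ) (b : Fin p → ℝ),
      (γ • b) ⬝ᵥ Shat.mulVec (γ • b) = γ^2 * (b ⬝ᵥ Shat.mulVec b) := by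
    intro γ b
    rw [mulVec_smul, dotProduct_smul, smul_dotProduct]
    simp [smul_eq_mul]; ring
  set m := μhat ⬝ᵥ βhat with hm
  set s := βhat ⬝ᵥ Shat.mulVec βhat with hsdef
  have hs : 0 < s := hSpos βhat hβmem hβne
  clear_value m s
  have hmin : ∀ b ∈ C, 1 - 2*m + (m^2+s)
      ≤ 1 - 2 * (μhat ⬝ᵥ b) + ((μhat ⬝ᵥ b)^2 + b ⬝ᵥ Shat.mulVec b) := by
    intro b hb
    by_cases hbe : b = βhat
    · subst hbe; rw [hm, hsdef]
    · have := hβuniq b hb hbe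
      rw [key βhat, key b] at this
      rw [hm, hsdef]
      exact this.le
  have hscale : ∀ γ : ℝ, 0 < γ →
      1 - 2*m + (m^2+s) ≤ 1 - 2*(γ*m) + ((γ*m)^2 + γ^2*s) := by
    intro γ hγ
    have h := hmin (γ • βhat) (hCcone βhat hβmem γ hγ)
    rw [scal1, scal2] at h
    rw [← hm, ← hsdef] at h
    nlinarith [h]
  -- m > 0
  have hm0 : 0 < m := by
    have h := hscale (1/2) (by norm_num)
    nlinarith [hs, sq_nonneg m]
  -- m^2 + s = m
  have hgm : m^2 + s = m := by
    have hg : 0 < m^2 + s := by positivity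
    have h := hscale (m / (m^2+s)) (by positivity)
    have hne := hg.ne'
    have h2 : 1 - 2*m + (m^2+s) ≤ 1 - m^2/(m^2+s) := by
      have e1 : m/(m^2+s) * m = m^2/(m^2+s) := by ring
      rw [e1] at h
      have e2 : (m^2/(m^2+s))^2 + (m/(m^2+s))^2 * s = m^2/(m^2+s) := by
        field_simp
      linarith [h, e2]
    have h3 : (m^2+s)^2 - 2*m*(m^2+s) + m^2 ≤ 0 := by
      have := mul_le_mul_of_nonneg_right h2 hg.le
      field_simp at this
      nlinarith [this]
    nlinarith [sq_nonneg (m^2+s - m)]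
  have hm1 : m < 1 := by nlinarith
  -- the candidate maximizer
  have hsq : 0 < Real.sqrt s := Real.sqrt_pos.2 hs
  have hsq2 : Real.sqrt s ^ 2 = s := Real.sq_sqrt hs.le
  set lstar : Fin p → ℝ := (Real.sqrt s)⁻¹ • βhat with hlstar
  clear_value lstar
  have hlsC : lstar ∈ C := by rw [hlstar]; exact hCcone βhat hβmem _ (inv_pos.2 hsq)
  have hls1 : lstar ⬝ᵥ Shat.mulVec lstar = 1 := by
    rw [hlstar, scal2, ← hsdef]
    field_simp
    exact hsq2.symm
  have hlsmem : lstar ∈ ({l ∈ C | l ⬝ᵥ Shat.mulVec l = 1} ∪ {0} : Set (Fin p → ℝ)) :=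
    Set.mem_union_left _ ⟨hlsC, hls1⟩
  have hlsval : μhat ⬝ᵥ lstar = (Real.sqrt s)⁻¹ * m := by
    rw [hlstar, scal1, ← hm]
  have hlspos : 0 < μhat ⬝ᵥ lstar := by
    rw [hlsval]; positivity
  by_contra hne
  have hne' : lstar ≠ lhat := fun h => hne h.symm
  have hlt : μhat ⬝ᵥ lstar < μhat ⬝ᵥ lhat := hluniq lstar hlsmem hne'
  -- now bound μhat ⬝ᵥ lhat from above
  rcases hlmem with ⟨hlC, hl1⟩ | hl0
  · set t := μhat ⬝ᵥ lhat with ht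
    clear_value t
    have htpos : 0 < t := lt_trans hlspos hlt
    have ht1 : 0 < t^2 + 1 := by positivity
    set u : ℝ := t / (t^2+1) with hu
    clear_value u
    have hγ : 0 < u := by rw [hu]; positivity
    have h := hmin (u • lhat) (hCcone lhat hlC u hγ)
    rw [scal1, scal2, ← ht, hl1] at h
    have hut : u * (t^2+1) = t := by rw [hu]; field_simp
    -- 1 - m ≤ 1 - t^2/(t^2+1)
    have h2 : t^2 * (1 - m) ≤ m := by
      have hA : 2*(u*t) - u^2*(t^2+1) ≤ m := by nlinarith [h, hgm]
      have hB := mul_le_mul_of_nonneg_right hA ht1.le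
      have hut2 : (u*(t^2+1))^2 = t^2 := by rw [hut]
      have hut3 : u*t*(t^2+1) = t^2 := by
        calc u*t*(t^2+1) = t * (u*(t^2+1)) := by ring
        _ = t * t := by rw [hut]
        _ = t^2 := by ring
      nlinarith [hB, hut2, hut3]
    -- hence t ≤ (√s)⁻¹ * m, contradicting hlt
    have hts : t * Real.sqrt s ≤ m := by
      nlinarith [h2, hsq2, hgm, hm0, mul_pos htpos hsq,
        sq_nonneg (t * Real.sqrt s - m), sq_nonneg (t * Real.sqrt s + m)]
    have : t ≤ (Real.sqrt s)⁻¹ * m := by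
      rw [← div_eq_inv_mul, le_div_iff₀ hsq]
      exact hts
    rw [hlsval] at hlt
    linarith
  · have h0 : lhat = 0 := hl0
    rw [h0, dotProduct_zero] at hlt
    linarith
end
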